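/- Let n and m be relatively prime positive integers with 2m ≤ n. A finite simple graph G has circular chromatic number at most n/m if and only if G admits an orientation G⃗ such that no oriented path in the family P_{n,m−1} admits a homomorphism to G⃗. -/

import Mathlib

/-- Adjacency in the circular complete graph `K_{n/m}`: vertex set `Z_n`, with `u ~ v`
iff `u - v ∈ {m, m+1, …, n-m}`. -/
def circRel (n m : ℕ) (u v : ZMod n) : Prop :=
  ∃ k : ℕ, m ≤ k ∧ k ≤ n - m ∧ u - v = (k : ZMod n)

/-- The circular chromatic number of a finite graph `G`: the least value `n/m` over
relatively prime positive integers `n`, `m` with `2m ≤ n` such that `G` admits a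
homomorphism to the circular complete graph `K_{n/m}`. -/
noncomputable def circChrom {V : Type} [Fintype V] (G : SimpleGraph V) : ℝ :=
  sInf {x : ℝ | ∃ n m : ℕ, 0 < m ∧ 2 * m ≤ n ∧ Nat.Coprime n m ∧
    Nonempty (G.Adj →r circRel n m) ∧ x = (n : ℝ) / (m : ℝ)}

/-- The oriented path on vertices `0, 1, …, n` obtained from the directed path `P⃗_n` by
orienting the arc between `i` and `i+1` from `i` to `i+1` iff `o i = true`. -/
def pathRel (n : ℕ) (o : Fin n → Bool) (a b : Fin (n + 1)) : Prop :=
  ∃ i : Fin n, (o i = true ∧ a = i.castSucc ∧ b = i.succ) ∨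
               (o i = false ∧ a = i.succ ∧ b = i.castSucc)

/-- `D` is an orientation of the simple graph `G`: each edge of `G` is assigned exactly
one of its two directions. -/
def IsOrientation {V : Type} (G : SimpleGraph V) (D : V → V → Prop) : Prop :=
  (∀ u v, D u v → G.Adj u v) ∧ ∀ u v, G.Adj u v → Xor' (D u v) (D v u)

namespace CGR

variable {V : Type}

/-- step weight -/
def g (n m : ℕ) (b : Bool) : ℤ := if b then (m : ℤ) else -((n : ℤ) - m)

def ValidWalk (D : V → V → Prop) (L : ℕ) (w : ℕ → V) (s : ℕ → Bool) : Prop :=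
  ∀ i < L, if s i then D (w i) (w (i + 1)) else D (w (i + 1)) (w i)

def wWeight (n m L : ℕ) (s : ℕ → Bool) : ℤ := ∑ i ∈ Finset.range L, g n m (s i)

def ClosedOK (D : V → V → Prop) (n m : ℕ) : Prop :=
  ∀ L w s, ValidWalk D L w s → w L = w 0 → wWeight n m L s ≤ 0

lemma g_le (n m : ℕ) (b : Bool) : g n m b ≤ (m : ℤ) := by
  cases b <;> simp [g] <;> positivity

lemma weight_eq (n m L : ℕ) (s : ℕ → Bool) :
    wWeight n m L s =
      (L : ℤ) * m - ((Finset.range L).filter fun i => s i = false).card * n := by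
  have h1 : ∀ b : Bool, g n m b = (m : ℤ) - (if b = false then (n : ℤ) else 0) := by
    intro b; cases b <;> simp [g] <;> ring
  have : wWeight n m L s
      = ∑ i ∈ Finset.range L, ((m : ℤ) - (if s i = false then (n : ℤ) else 0)) := by
    unfold wWeight; exact Finset.sum_congr rfl fun i _ => h1 (s i)
  rw [this, Finset.sum_sub_distrib, Finset.sum_const, ← Finset.sum_filter,
    Finset.sum_const, Finset.card_range]
  push_cast; ring

lemma card_conv (N : ℕ) (q : ℕ → Bool) :
    (((Finset.range N).filter fun i => q i = false).card : ℤ)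
      = ((Finset.univ.filter fun i : Fin N => q i.val = false).card : ℤ) := by
  rw [Finset.card_filter, Finset.card_filter]
  rw [← Fin.sum_univ_eq_sum_range (fun i => if q i = false then 1 else 0) N]

/-- telescoping bound -/
lemma weight_tele (D : V → V → Prop) (n m : ℕ) (ρ : V → ℤ)
    (hd : ∀ u v, D u v → (m : ℤ) ≤ ρ v - ρ u ∧ ρ v - ρ u ≤ (n : ℤ) - m) :
    ∀ L w s, ValidWalk D L w s → wWeight n m L s ≤ ρ (w L) - ρ (w 0) := by
  intro L
  induction L with
  | zero => intro w s _; simp [wWeight]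
  | succ L ih =>
    intro w s hv
    have hv' : ValidWalk D L w s := fun i hi => hv i (by omega)
    have h1 := ih w s hv'
    have hstep : g n m (s L) ≤ ρ (w (L + 1)) - ρ (w L) := by
      have hvl := hv L (by omega)
      cases hsl : s L with
      | true =>
        rw [hsl] at hvl; simp only [if_true] at hvl
        have := (hd _ _ hvl).1
        simp only [g, hsl, if_true]
        omega
      | false =>
        rw [hsl] at hvl; simp only [Bool.false_eq_true, if_false] at hvl
        have := (hd _ _ hvl).2
        simp only [g, hsl, Bool.false_eq_true, if_false]
        omega
    have : wWeight n m (L + 1) s = wWeight n m L s + g n m (s L) := by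
      unfold wWeight; rw [Finset.sum_range_succ]
    omega

lemma closedOK_of_rho (D : V → V → Prop) (n m : ℕ) (ρ : V → ℤ)
    (hd : ∀ u v, D u v → (m : ℤ) ≤ ρ v - ρ u ∧ ρ v - ρ u ≤ (n : ℤ) - m) :
    ClosedOK D n m := by
  intro L w s hv hcl
  have := weight_tele D n m ρ hd L w s hv
  rw [hcl] at this; omega

lemma no_bad_path_of_rho (D : V → V → Prop) (n m : ℕ) (hm : 0 < m) (h2 : 2 * m ≤ n)
    (ρ : V → ℤ) (hb : ∀ v, 0 ≤ ρ v ∧ ρ v ≤ (n : ℤ) - 1)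
    (hd : ∀ u v, D u v → (m : ℤ) ≤ ρ v - ρ u ∧ ρ v - ρ u ≤ (n : ℤ) - m) :
    ∀ o : Fin n → Bool, (Finset.univ.filter fun i => o i = false).card ≤ m - 1 →
      ¬ Nonempty (pathRel n o →r D) := by
  intro o hcard hne
  obtain ⟨h⟩ := hne
  have hn : 0 < n := by omega
  set w : ℕ → V := fun i => h ⟨min i n, by omega⟩ with hw
  set s : ℕ → Bool := fun i => o ⟨i % n, Nat.mod_lt i hn⟩ with hs
  have hv : ValidWalk D n w s := by
    intro i hi
    have hio : s i = o ⟨i, hi⟩ := by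
      simp only [hs]; congr 1; exact Fin.ext (Nat.mod_eq_of_lt hi)
    have e1 : w i = h ((⟨i, hi⟩ : Fin n).castSucc) := by
      simp only [hw]; congr 1; exact Fin.ext (by simp [Nat.min_eq_left (le_of_lt hi)])
    have e2 : w (i + 1) = h ((⟨i, hi⟩ : Fin n).succ) := by
      simp only [hw]; congr 1; exact Fin.ext (by simp [Nat.min_eq_left hi])
    rw [hio, e1, e2]
    cases ho : o ⟨i, hi⟩ with
    | true =>
      simp only [if_true]
      exact h.map_rel ⟨⟨i, hi⟩, Or.inl ⟨ho, rfl, rfl⟩⟩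
    | false =>
      simp only [Bool.false_eq_true, if_false]
      exact h.map_rel ⟨⟨i, hi⟩, Or.inr ⟨ho, rfl, rfl⟩⟩
  have htele := weight_tele D n m ρ hd n w s hv
  have hub : ρ (w n) - ρ (w 0) ≤ (n : ℤ) - 1 := by
    have := (hb (w n)).2; have := (hb (w 0)).1; omega
  have hcc : (((Finset.range n).filter fun i => s i = false).card : ℤ)
      = ((Finset.univ.filter fun i : Fin n => o i = false).card : ℤ) := by
    rw [card_conv n s]
    congr 2
    apply Finset.filter_congr
    intro i _
    have : s i.val = o i := by
      simp only [hs]; congr 1; exact Fin.ext (by simp [Nat.mod_eq_of_lt i.isLt])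
    rw [this]
  rw [weight_eq, hcc] at htele
  set r := (Finset.univ.filter fun i : Fin n => o i = false).card
  have hr : (r : ℤ) ≤ (m : ℤ) - 1 := by
    have h1 : r + 1 ≤ m := by omega
    have h2 : (r : ℤ) + 1 ≤ (m : ℤ) := by exact_mod_cast h1
    omega
  have h1 : (n : ℤ) * m - r * n ≥ (n : ℤ) := by nlinarith [Int.ofNat_nonneg n]
  omega

lemma sum_range_add' (f : ℕ → ℤ) (a b : ℕ) :
    ∑ i ∈ Finset.range (a + b), f i
      = (∑ i ∈ Finset.range a, f i) + ∑ i ∈ Finset.range b, f (a + i) := by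
  induction b with
  | zero => simp
  | succ b ih =>
    rw [show a + (b + 1) = (a + b) + 1 by omega, Finset.sum_range_succ, ih,
      Finset.sum_range_succ]
    ring

lemma closedOK_of_good (D : V → V → Prop) (n m : ℕ) (hm : 0 < m) (h2 : 2 * m ≤ n)
    (hgood : ∀ o : Fin n → Bool, (Finset.univ.filter fun i => o i = false).card ≤ m - 1 →
      ¬ Nonempty (pathRel n o →r D)) :
    ClosedOK D n m := by
  intro L w s hv hcl
  by_contra hpos
  push_neg at hpos
  have hn : 0 < n := by omega
  have hL : 0 < L := by
    rcases Nat.eq_zero_or_pos L with h | h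
    · exfalso; subst h; simp [wWeight] at hpos
    · exact h
  set w' : ℕ → V := fun i => w (i % L) with hw'
  set s' : ℕ → Bool := fun i => s (i % L) with hs'
  have hmodlt : ∀ i : ℕ, i % L < L := fun i => Nat.mod_lt i hL
  have hsucc : ∀ i : ℕ, (i + 1) % L = (i % L + 1) % L := by
    intro i
    exact (Nat.ModEq.add_right 1 (Nat.mod_modEq i L)).symm
  have hwsucc : ∀ i : ℕ, w' (i + 1) = w (i % L + 1) := by
    intro i
    by_cases hc : i % L + 1 = L
    · have : (i + 1) % L = 0 := by rw [hsucc i, hc, Nat.mod_self]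
      simp only [hw', this, hc]
      rw [← hcl]
    · have : (i + 1) % L = i % L + 1 := by
        rw [hsucc i]; exact Nat.mod_eq_of_lt (by have := hmodlt i; omega)
      simp only [hw', this]
  have hv' : ∀ i, if s' i then D (w' i) (w' (i + 1)) else D (w' (i + 1)) (w' i) := by
    intro i
    have := hv (i % L) (hmodlt i)
    rw [hwsucc i]
    exact this
  -- prefix sums
  set p : ℕ → ℤ := fun t => wWeight n m t s' with hp
  have hwin0 : ∀ t, p (t + n) = p t + ∑ j ∈ Finset.range n, g n m (s' (t + j)) := by
    intro t
    exact sum_range_add' (fun i => g n m (s' i)) t n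
  -- every window is nonpositive
  have hwin : ∀ t, (∑ j ∈ Finset.range n, g n m (s' (t + j))) ≤ 0 := by
    intro t
    by_contra hwpos
    push_neg at hwpos
    set o : Fin n → Bool := fun j => s' (t + j.val) with ho
    have hsum : (∑ j ∈ Finset.range n, g n m (s' (t + j)))
        = (n : ℤ) * m - ((Finset.univ.filter fun j : Fin n => o j = false).card) * n := by
      rw [show (∑ j ∈ Finset.range n, g n m (s' (t + j)))
          = wWeight n m n (fun j => s' (t + j)) from rfl]
      rw [weight_eq, card_conv n (fun j => s' (t + j))]
    set r := (Finset.univ.filter fun j : Fin n => o j = false).card with hr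
    have hrm : (r : ℤ) < m := by
      rw [hsum] at hwpos
      nlinarith [Int.ofNat_nonneg r, Int.ofNat_nonneg n, show (0:ℤ) < n by exact_mod_cast hn]
    have hrm' : r ≤ m - 1 := by
      have : r < m := by exact_mod_cast hrm
      omega
    apply hgood o hrm'
    refine ⟨⟨fun j => w' (t + j.val), ?_⟩⟩
    rintro a b ⟨i, hcase⟩
    rcases hcase with ⟨hoi, ha, hb⟩ | ⟨hoi, ha, hb⟩
    · subst ha; subst hb
      have := hv' (t + i.val)
      have hsi : s' (t + i.val) = true := hoi
      rw [hsi] at this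
      simp only [if_true] at this
      simpa [Nat.add_assoc] using this
    · subst ha; subst hb
      have := hv' (t + i.val)
      have hsi : s' (t + i.val) = false := hoi
      rw [hsi] at this
      simp only [Bool.false_eq_true, if_false] at this
      simpa [Nat.add_assoc] using this
  have hmult : ∀ k : ℕ, p (k * n) ≤ 0 := by
    intro k
    induction k with
    | zero => simp [hp, wWeight]
    | succ k ih =>
      have : (k + 1) * n = k * n + n := by ring
      rw [this, hwin0]
      have := hwin (k * n)
      omega
  have hstep : ∀ t k : ℕ, p (t + k) ≤ p t + (k : ℤ) * m := by
    intro t k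
    induction k with
    | zero => simp
    | succ k ih =>
      have : t + (k + 1) = (t + k) + 1 := by omega
      rw [this]
      have hone : p ((t + k) + 1) = p (t + k) + g n m (s' (t + k)) := by
        simp only [hp, wWeight, Finset.sum_range_succ]
      have hg := g_le n m (s' (t + k))
      have hexp : ((k : ℤ) + 1) * m = (k : ℤ) * m + m := by ring
      push_cast
      rw [hone, hexp]
      linarith
  have hbound : ∀ T : ℕ, p T ≤ (n : ℤ) * m := by
    intro T
    have hT : n * (T / n) + T % n = T := Nat.div_add_mod T n
    have h1 := hstep (n * (T / n)) (T % n)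
    rw [hT] at h1
    have h2 : p (n * (T / n)) ≤ 0 := by
      rw [show n * (T / n) = (T / n) * n by ring]
      exact hmult (T / n)
    have h3 : ((T % n : ℕ) : ℤ) ≤ (n : ℤ) := by
      have := Nat.mod_lt T hn
      exact_mod_cast le_of_lt this
    have h4 : ((T % n : ℕ) : ℤ) * m ≤ (n : ℤ) * m :=
      mul_le_mul_of_nonneg_right h3 (Int.ofNat_nonneg m)
    linarith
  -- repetition grows
  have hrep : ∀ k : ℕ, p (k * L) = (k : ℤ) * wWeight n m L s := by
    intro k
    induction k with
    | zero => simp [hp, wWeight]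
    | succ k ih =>
      have : (k + 1) * L = k * L + L := by ring
      rw [this]
      have : p (k * L + L) = p (k * L) + ∑ j ∈ Finset.range L, g n m (s' (k * L + j)) := by
        exact sum_range_add' (fun i => g n m (s' i)) (k * L) L
      rw [this, ih]
      have hper : ∀ j, j < L → s' (k * L + j) = s j := by
        intro j hj
        simp only [hs']
        congr 1
        rw [show k * L + j = L * k + j by ring, Nat.mul_add_mod, Nat.mod_eq_of_lt hj]
      have : (∑ j ∈ Finset.range L, g n m (s' (k * L + j)))
          = ∑ j ∈ Finset.range L, g n m (s j) := by
        apply Finset.sum_congr rfl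
        intro j hj
        rw [hper j (Finset.mem_range.mp hj)]
      rw [this]
      push_cast
      unfold wWeight
      ring
  have hfinal := hrep (n * m + 1)
  have hge : p ((n * m + 1) * L) ≥ ((n * m + 1 : ℕ) : ℤ) * 1 := by
    rw [hfinal]
    have : (1 : ℤ) ≤ wWeight n m L s := hpos
    have hk : (0 : ℤ) ≤ ((n * m + 1 : ℕ) : ℤ) := Int.ofNat_nonneg _
    nlinarith
  have hle := hbound ((n * m + 1) * L)
  push_cast at hge
  push_cast at hle
  nlinarith
lemma weight_bound [Fintype V] (D : V → V → Prop) (n m : ℕ) (hc : ClosedOK D n m) :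
    ∀ L w s, ValidWalk D L w s → wWeight n m L s ≤ (Fintype.card V : ℤ) * m := by
  intro L
  induction L using Nat.strong_induction_on with
  | _ L ih =>
    intro w s hw
    by_cases hrep : ∃ q : ℕ × ℕ, q.1 < q.2 ∧ q.2 ≤ L ∧ w q.1 = w q.2
    · obtain ⟨⟨i, j⟩, hij, hjL, heq⟩ := hrep
      set d := j - i with hd
      have hdpos : 0 < d := by omega
      have hji : j = i + d := by omega
      have hmidv : ValidWalk D d (fun t => w (i + t)) (fun t => s (i + t)) := by
        intro t ht
        exact hw (i + t) (by omega)
      have hmidc : (fun t => w (i + t)) d = (fun t => w (i + t)) 0 := by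
        show w (i + d) = w (i + 0)
        rw [show i + d = j by omega, show i + 0 = i by omega]
        exact heq.symm
      have hmid : wWeight n m d (fun t => s (i + t)) ≤ 0 := hc d _ _ hmidv hmidc
      set L2 := L - d with hL2
      have hL2lt : L2 < L := by omega
      set w2 : ℕ → V := fun t => if t < i then w t else w (t + d) with hw2
      set s2 : ℕ → Bool := fun t => if t < i then s t else s (t + d) with hs2
      have hkey : ∀ t, ¬ (t < i) → w2 t = w (t + d) := by
        intro t ht; simp [hw2, ht]
      have hv2 : ValidWalk D L2 w2 s2 := by
        intro t ht
        by_cases hti : t < i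
        · have e0 : s2 t = s t := by simp [hs2, hti]
          have e1 : w2 t = w t := by simp [hw2, hti]
          have e2 : w2 (t + 1) = w (t + 1) := by
            by_cases h1 : t + 1 < i
            · simp [hw2, h1]
            · have ht1 : t + 1 = i := by omega
              have hk := hkey (t + 1) (by omega)
              rw [hk, show t + 1 + d = j by omega, ← heq, ht1]
          rw [e0, e1, e2]; exact hw t (by omega)
        · have e0 : s2 t = s (t + d) := by simp [hs2, hti]
          have e1 : w2 t = w (t + d) := hkey t hti
          have e2 : w2 (t + 1) = w ((t + d) + 1) := by
            have h1 : ¬ (t + 1 < i) := by omega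
            rw [hkey (t + 1) h1, show t + 1 + d = (t + d) + 1 by omega]
          rw [e0, e1, e2]; exact hw (t + d) (by omega)
      have h2 := ih L2 hL2lt w2 s2 hv2
      have hsplit1 : wWeight n m L s = (∑ t ∈ Finset.range j, g n m (s t))
          + ∑ t ∈ Finset.range (L - j), g n m (s (j + t)) := by
        have h := sum_range_add' (fun t => g n m (s t)) j (L - j)
        rw [show j + (L - j) = L by omega] at h
        exact h
      have hsplit2 : (∑ t ∈ Finset.range j, g n m (s t))
          = (∑ t ∈ Finset.range i, g n m (s t))
            + ∑ t ∈ Finset.range d, g n m (s (i + t)) := by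
        have h := sum_range_add' (fun t => g n m (s t)) i d
        rw [← hji] at h
        exact h
      have hsplit3 : wWeight n m L2 s2 = (∑ t ∈ Finset.range i, g n m (s t))
          + ∑ t ∈ Finset.range (L - j), g n m (s (j + t)) := by
        have e : L2 = i + (L - j) := by omega
        rw [show wWeight n m L2 s2 = ∑ t ∈ Finset.range L2, g n m (s2 t) from rfl, e,
          sum_range_add' (fun t => g n m (s2 t)) i (L - j)]
        congr 1
        · apply Finset.sum_congr rfl
          intro t ht
          have : t < i := Finset.mem_range.mp ht
          simp [hs2, this]
        · apply Finset.sum_congr rfl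
          intro t ht
          have hni : ¬ (i + t < i) := by omega
          simp only [hs2, if_neg hni]
          rw [show i + t + d = j + t by omega]
      have hmid' : (∑ t ∈ Finset.range d, g n m (s (i + t))) ≤ 0 := hmid
      rw [hsplit1, hsplit2]
      linarith [h2, hmid', hsplit3]
    · push_neg at hrep
      have hinj : Function.Injective (fun t : Fin (L + 1) => w t.val) := by
        intro a b hab
        simp only [] at hab
        by_contra hne
        rcases Nat.lt_trichotomy a.val b.val with h | h | h
        · exact hrep (a.val, b.val) h (by omega) hab
        · exact hne (Fin.ext h)
        · exact hrep (b.val, a.val) h (by omega) hab.symm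
      have hcard : L + 1 ≤ Fintype.card V := by
        have h := Fintype.card_le_of_injective _ hinj
        simpa using h
      have hterm : wWeight n m L s ≤ (L : ℤ) * m := by
        unfold wWeight
        calc (∑ i ∈ Finset.range L, g n m (s i)) ≤ ∑ _i ∈ Finset.range L, (m : ℤ) :=
              Finset.sum_le_sum (fun i _ => g_le n m (s i))
          _ = (L : ℤ) * m := by
              rw [Finset.sum_const, Finset.card_range, nsmul_eq_mul]
      have hLm : (L : ℤ) * m ≤ (Fintype.card V : ℤ) * m := by
        have hLc : (L : ℤ) ≤ (Fintype.card V : ℤ) := by exact_mod_cast by omega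
        exact mul_le_mul_of_nonneg_right hLc (Int.ofNat_nonneg m)
      linarith

def WSet (D : V → V → Prop) (n m : ℕ) (v : V) : Set ℤ :=
  {x | ∃ L w s, ValidWalk D L w s ∧ w L = v ∧ wWeight n m L s = x}

lemma WSet.zero_mem (D : V → V → Prop) (n m : ℕ) (v : V) : (0 : ℤ) ∈ WSet D n m v :=
  ⟨0, fun _ => v, fun _ => true, fun i hi => absurd hi (Nat.not_lt_zero i), rfl,
    by simp [wWeight]⟩

lemma WSet.extend_fwd {D : V → V → Prop} {n m : ℕ} {u v : V} (hD : D u v) {x : ℤ}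
    (hx : x ∈ WSet D n m u) : x + m ∈ WSet D n m v := by
  obtain ⟨L, w, s, hv, he, hwt⟩ := hx
  refine ⟨L + 1, fun t => if t ≤ L then w t else v, fun t => if t = L then true else s t,
    ?_, ?_, ?_⟩
  · intro i hi
    by_cases hiL : i = L
    · have e1 : (if i = L then true else s i) = true := if_pos hiL
      have e2 : (if i ≤ L then w i else v) = w i := if_pos (by omega)
      have e3 : (if i + 1 ≤ L then w (i + 1) else v) = v := if_neg (by omega)
      simp only [e1, e2, e3, if_true]
      rw [hiL, he]
      exact hD
    · have hiL' : i < L := by omega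
      simp only [if_neg hiL, if_pos (show i ≤ L by omega), if_pos (show i + 1 ≤ L by omega)]
      exact hv i hiL'
  · simp only [if_neg (show ¬ (L + 1 ≤ L) by omega)]
  · unfold wWeight
    rw [Finset.sum_range_succ]
    simp only [if_pos rfl]
    have : (∑ i ∈ Finset.range L, g n m (if i = L then true else s i))
        = ∑ i ∈ Finset.range L, g n m (s i) := by
      apply Finset.sum_congr rfl
      intro i hi
      rw [if_neg (by have := Finset.mem_range.mp hi; omega)]
    rw [this]
    unfold wWeight at hwt
    rw [hwt]
    simp [g]

lemma WSet.extend_bwd {D : V → V → Prop} {n m : ℕ} {u v : V} (hD : D u v) {x : ℤ}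
    (hx : x ∈ WSet D n m v) : x - ((n : ℤ) - m) ∈ WSet D n m u := by
  obtain ⟨L, w, s, hv, he, hwt⟩ := hx
  refine ⟨L + 1, fun t => if t ≤ L then w t else u, fun t => if t = L then false else s t,
    ?_, ?_, ?_⟩
  · intro i hi
    by_cases hiL : i = L
    · have e1 : (if i = L then false else s i) = false := if_pos hiL
      have e2 : (if i ≤ L then w i else u) = w i := if_pos (by omega)
      have e3 : (if i + 1 ≤ L then w (i + 1) else u) = u := if_neg (by omega)
      simp only [e1, e2, e3, Bool.false_eq_true, if_false]
      rw [hiL, he]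
      exact hD
    · have hiL' : i < L := by omega
      simp only [if_neg hiL, if_pos (show i ≤ L by omega), if_pos (show i + 1 ≤ L by omega)]
      exact hv i hiL'
  · simp only [if_neg (show ¬ (L + 1 ≤ L) by omega)]
  · unfold wWeight
    rw [Finset.sum_range_succ]
    simp only [if_pos rfl]
    have : (∑ i ∈ Finset.range L, g n m (if i = L then false else s i))
        = ∑ i ∈ Finset.range L, g n m (s i) := by
      apply Finset.sum_congr rfl
      intro i hi
      rw [if_neg (by have := Finset.mem_range.mp hi; omega)]
    rw [this]
    unfold wWeight at hwt
    rw [hwt]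
    simp [g]
    ring

lemma hom_of_closedOK [Fintype V] (G : SimpleGraph V) (D : V → V → Prop) (n m : ℕ)
    (hm : 0 < m) (h2 : 2 * m ≤ n) (hor : IsOrientation G D) (hc : ClosedOK D n m) :
    Nonempty (G.Adj →r circRel n m) := by
  have hn : 0 < n := by omega
  set ℓ : V → ℤ := fun v => sSup (WSet D n m v) with hℓ
  have hbdd : ∀ v : V, BddAbove (WSet D n m v) := by
    intro v
    refine ⟨(Fintype.card V : ℤ) * m, ?_⟩
    rintro x ⟨L, w, s, h1, _, h3⟩
    rw [← h3]
    exact weight_bound D n m hc L w s h1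
  have hne : ∀ v : V, (WSet D n m v).Nonempty := fun v => ⟨0, WSet.zero_mem D n m v⟩
  have harc : ∀ u v, D u v → (m : ℤ) ≤ ℓ v - ℓ u ∧ ℓ v - ℓ u ≤ (n : ℤ) - m := by
    intro u v hD
    constructor
    · have h1 : ℓ u ≤ ℓ v - m := by
        apply csSup_le (hne u)
        intro x hx
        have h3 : x + (m : ℤ) ≤ ℓ v := le_csSup (hbdd v) (WSet.extend_fwd hD hx)
        omega
      omega
    · have h1 : ℓ v ≤ ℓ u + ((n : ℤ) - m) := by
        apply csSup_le (hne v)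
        intro x hx
        have h3 : x - ((n : ℤ) - m) ≤ ℓ u := le_csSup (hbdd u) (WSet.extend_bwd hD hx)
        omega
      omega
  refine ⟨⟨fun v => ((ℓ v : ℤ) : ZMod n), ?_⟩⟩
  intro u v huv
  have h0 : ((n : ℕ) : ZMod n) = 0 := ZMod.natCast_self n
  rcases hor.2 u v huv with ⟨hDuv, _⟩ | ⟨hDvu, _⟩
  · obtain ⟨hd1, hd2⟩ := harc u v hDuv
    have hnonneg : (0 : ℤ) ≤ (n : ℤ) - (ℓ v - ℓ u) := by omega
    refine ⟨((n : ℤ) - (ℓ v - ℓ u)).toNat, ?_, ?_, ?_⟩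
    · rw [Int.le_toNat hnonneg]
      omega
    · rw [← Nat.cast_le (α := ℤ), Int.toNat_of_nonneg hnonneg, Nat.cast_sub (by omega)]
      omega
    · have e1 : ((((n : ℤ) - (ℓ v - ℓ u)).toNat : ℕ) : ZMod n)
          = (((n : ℤ) - (ℓ v - ℓ u) : ℤ) : ZMod n) := by
        rw [← Int.cast_natCast, Int.toNat_of_nonneg hnonneg]
      rw [e1]
      push_cast
      rw [h0]
      ring
  · obtain ⟨hd1, hd2⟩ := harc v u hDvu
    have hnonneg : (0 : ℤ) ≤ ℓ u - ℓ v := by omega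
    refine ⟨(ℓ u - ℓ v).toNat, ?_, ?_, ?_⟩
    · rw [Int.le_toNat hnonneg]
      omega
    · rw [← Nat.cast_le (α := ℤ), Int.toNat_of_nonneg hnonneg, Nat.cast_sub (by omega)]
      omega
    · have e1 : (((ℓ u - ℓ v).toNat : ℕ) : ZMod n) = ((ℓ u - ℓ v : ℤ) : ZMod n) := by
        rw [← Int.cast_natCast, Int.toNat_of_nonneg hnonneg]
      rw [e1]
      push_cast
      ring

lemma exists_orient (G : SimpleGraph V) (n m : ℕ) (hm : 0 < m) (h2 : 2 * m ≤ n)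
    (c : G.Adj →r circRel n m) :
    ∃ (D : V → V → Prop) (ρ : V → ℤ), IsOrientation G D ∧
      (∀ v, 0 ≤ ρ v ∧ ρ v ≤ (n : ℤ) - 1) ∧
      (∀ u v, D u v → (m : ℤ) ≤ ρ v - ρ u ∧ ρ v - ρ u ≤ (n : ℤ) - m) := by
  have hn : 0 < n := by omega
  haveI : NeZero n := ⟨by omega⟩
  set a : V → ℕ := fun v => (c v).val with ha
  have hcast : ∀ v : V, ((a v : ℕ) : ZMod n) = c v := fun v => ZMod.natCast_rightInverse (c v)
  have hlt : ∀ v : V, a v < n := fun v => ZMod.val_lt (c v)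
  have key : ∀ u v, G.Adj u v → a u < a v →
      m ≤ a v - a u ∧ a v - a u ≤ n - m := by
    intro u v hadj hlt'
    have hau := hlt u
    have hav := hlt v
    obtain ⟨k, hk1, hk2, hk⟩ := c.map_rel hadj
    have hkn : k < n := by omega
    have e1 : ((a v - a u : ℕ) : ZMod n) = ((n - k : ℕ) : ZMod n) := by
      rw [Nat.cast_sub (le_of_lt hlt'), Nat.cast_sub (le_of_lt hkn), hcast, hcast,
        ZMod.natCast_self]
      have : c u - c v = (k : ZMod n) := hk
      linear_combination -this
    have e2 : a v - a u = n - k := by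
      have h1 := ZMod.val_cast_of_lt (show a v - a u < n by omega)
      have h2 := ZMod.val_cast_of_lt (show n - k < n by omega)
      rw [← h1, ← h2, e1]
    omega
  have hneq : ∀ u v, G.Adj u v → a u ≠ a v := by
    intro u v hadj heq
    obtain ⟨k, hk1, hk2, hk⟩ := c.map_rel hadj
    have hcc : c u = c v := by rw [← hcast, ← hcast, heq]
    have h3 : (0 : ZMod n) = (k : ZMod n) := by rw [← hk, hcc, sub_self]
    have h4 := ZMod.val_cast_of_lt (show k < n by omega)
    rw [← h3] at h4
    simp [ZMod.val_zero] at h4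
    omega
  refine ⟨fun u v => G.Adj u v ∧ a u < a v, fun v => (a v : ℤ), ⟨?_, ?_⟩, ?_, ?_⟩
  · exact fun u v h => h.1
  · intro u v hadj
    have hne := hneq u v hadj
    rcases Nat.lt_or_ge (a u) (a v) with h | h
    · exact Or.inl ⟨⟨hadj, h⟩, fun hB => by omega⟩
    · have h' : a v < a u := by omega
      exact Or.inr ⟨⟨hadj.symm, h'⟩, fun hA => by omega⟩
  · intro v
    dsimp only
    have h5 : ((a v : ℕ) : ℤ) < (n : ℤ) := by exact_mod_cast hlt v
    constructor
    · positivity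
    · omega
  · rintro u v ⟨hadj, hlt'⟩
    dsimp only
    have hk := key u v hadj hlt'
    have hau := hlt u
    have hav := hlt v
    omega

lemma exists_trivial_hom [Fintype V] (G : SimpleGraph V) :
    ∃ N : ℕ, 2 * 1 ≤ N ∧ Nat.Coprime N 1 ∧ Nonempty (G.Adj →r circRel N 1) := by
  set N := Fintype.card V + 2 with hN
  haveI : NeZero N := ⟨by omega⟩
  have hcard : Fintype.card V ≤ Fintype.card (ZMod N) := by
    have hcz : Fintype.card (ZMod N) = N := ZMod.card N
    omega
  obtain ⟨f⟩ := Function.Embedding.nonempty_of_card_le hcard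
  refine ⟨N, by omega, Nat.coprime_one_right N, ⟨⟨fun v => f v, ?_⟩⟩⟩
  intro u v huv
  have hfne : f u - f v ≠ 0 := by
    rw [sub_ne_zero]
    exact fun hc => G.ne_of_adj huv (f.injective hc)
  refine ⟨(f u - f v).val, ?_, ?_, ?_⟩
  · have hne0 : (f u - f v).val ≠ 0 := fun h => hfne (by rwa [← ZMod.val_eq_zero])
    omega
  · have := ZMod.val_lt (f u - f v)
    omega
  · exact (ZMod.natCast_rightInverse _).symm

end CGR

open CGR in
/-- Circular Gallai–Roy theorem: for relatively prime positive integers `n`, `m` with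
`2m ≤ n`, a finite simple graph `G` has circular chromatic number at most `n/m` iff `G`
admits an orientation `G⃗` such that no oriented path obtained from the directed path
`P⃗_n` by reversing at most `m-1` arcs admits a homomorphism to `G⃗`. -/
theorem circular_gallai_roy {V : Type} [Fintype V] (G : SimpleGraph V) (n m : ℕ)
    (hm : 0 < m) (h2 : 2 * m ≤ n) (hcop : Nat.Coprime n m) :
    circChrom G ≤ (n : ℝ) / (m : ℝ) ↔
    ∃ D : V → V → Prop, IsOrientation G D ∧
      ∀ o : Fin n → Bool, (Finset.univ.filter fun i => o i = false).card ≤ m - 1 →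
        ¬ Nonempty (pathRel n o →r D) := by
  classical
  set S := {x : ℝ | ∃ n' m' : ℕ, 0 < m' ∧ 2 * m' ≤ n' ∧ Nat.Coprime n' m' ∧
    Nonempty (G.Adj →r circRel n' m') ∧ x = (n' : ℝ) / (m' : ℝ)} with hS
  have hSdef : circChrom G = sInf S := rfl
  constructor
  · intro hle
    rw [hSdef] at hle
    obtain ⟨N, hN2, hNcop, hNhom⟩ := exists_trivial_hom G
    have hSne : S.Nonempty := ⟨(N : ℝ) / ((1 : ℕ) : ℝ), N, 1, by norm_num, hN2, hNcop, hNhom, rfl⟩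
    have happrox : ∀ j : ℕ, ∃ (D : V → V → Prop) (n' m' : ℕ),
        0 < m' ∧ 2 * m' ≤ n' ∧ IsOrientation G D ∧ ClosedOK D n' m' ∧
        (n' : ℝ) / m' < (n : ℝ) / m + 1 / (j + 1) := by
      intro j
      have hpos : (0 : ℝ) < 1 / ((j : ℝ) + 1) := by positivity
      have hlt : sInf S < (n : ℝ) / m + 1 / (j + 1) := by
        calc sInf S ≤ (n : ℝ) / m := hle
          _ < (n : ℝ) / m + 1 / (j + 1) := by linarith
      obtain ⟨x, hxS, hx⟩ := exists_lt_of_csInf_lt hSne hlt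
      obtain ⟨n', m', hm', h2', _, ⟨c'⟩, hxe⟩ := hxS
      obtain ⟨D, ρ, hor, hρb, hρd⟩ := exists_orient G n' m' hm' h2' c'
      refine ⟨D, n', m', hm', h2', hor, closedOK_of_rho D n' m' ρ hρd, ?_⟩
      rw [hxe] at hx
      exact hx
    choose Dj nj mj hmj h2j horj hclj hltj using happrox
    set F : ℕ → (V → V → Bool) := fun j u v => decide (Dj j u v) with hF
    obtain ⟨b, hb⟩ := Finite.exists_infinite_fiber F
    have hbinf : (F ⁻¹' {b} : Set ℕ).Infinite := Set.infinite_coe_iff.mp hb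
    have hiff : ∀ j ∈ (F ⁻¹' {b} : Set ℕ), ∀ u v, (b u v = true) ↔ Dj j u v := by
      intro j hj u v
      have hFj : F j = b := hj
      rw [← hFj]
      simp [hF]
    obtain ⟨j0, hj0⟩ := hbinf.nonempty
    set D : V → V → Prop := fun u v => b u v = true with hD
    have horD : IsOrientation G D := by
      obtain ⟨ho1, ho2⟩ := horj j0
      constructor
      · intro u v h
        exact ho1 u v ((hiff j0 hj0 u v).mp h)
      · intro u v hadj
        have hx := ho2 u v hadj
        have e1 := hiff j0 hj0 u v
        have e2 := hiff j0 hj0 v u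
        unfold Xor' Xor at hx ⊢
        tauto
    have hclD : ClosedOK D n m := by
      intro L w s hv hcl
      rw [weight_eq]
      obtain ⟨j, hjmem, hjgt⟩ :=
        hbinf.exists_gt (((Finset.range L).filter fun i => s i = false).card * m)
      have hvj : ValidWalk (Dj j) L w s := by
        intro i hi
        have hvi := hv i hi
        cases hsi : s i with
        | true =>
          rw [hsi] at hvi
          simp only [if_true] at hvi ⊢
          exact (hiff j hjmem _ _).mp hvi
        | false =>
          rw [hsi] at hvi
          simp only [Bool.false_eq_true, if_false] at hvi ⊢
          exact (hiff j hjmem _ _).mp hvi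
      have hwj := hclj j L w s hvj hcl
      rw [weight_eq] at hwj
      generalize hgen : ((Finset.range L).filter fun i => s i = false).card = r at hwj hjgt ⊢
      have hwjz : (L : ℤ) * mj j ≤ (r : ℤ) * nj j := by linarith [hwj]
      have hwj' : L * mj j ≤ r * nj j := by exact_mod_cast hwjz
      -- integer form of hltj
      have hmjpos : (0 : ℝ) < (mj j : ℝ) := by exact_mod_cast hmj j
      have hmpos : (0 : ℝ) < (m : ℝ) := by exact_mod_cast hm
      have hjp : (0 : ℝ) < ((j : ℝ) + 1) := by positivity
      have hint : nj j * (m * (j + 1)) < mj j * (n * (j + 1) + m) := by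
        have h := hltj j
        rw [div_add_div _ _ (ne_of_gt hmpos) (ne_of_gt hjp), div_lt_div_iff₀ hmjpos
          (by positivity)] at h
        have h' : (nj j : ℝ) * (m * (j + 1)) < (mj j : ℝ) * (n * (j + 1) + m) := by
          ring_nf at h ⊢
          linarith
        exact_mod_cast h'
      -- conclude L * m ≤ r * n
      have hgoal : L * m ≤ r * n := by
        by_contra hcon
        push_neg at hcon
        rcases Nat.eq_zero_or_pos r with hr0 | hrpos
        · subst hr0
          have hmj' := hmj j
          have hz : L * mj j = 0 := by simpa using hwj'
          have hL0 : L = 0 := by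
            rcases Nat.mul_eq_zero.mp hz with h | h
            · exact h
            · omega
          subst hL0
          simp at hcon
        · -- work in ℤ
          have f1 : (L : ℤ) * mj j ≤ (r : ℤ) * nj j := by exact_mod_cast hwj'
          have f2 : (nj j : ℤ) * (m * (j + 1)) < (mj j : ℤ) * (n * (j + 1) + m) := by
            exact_mod_cast hint
          have f3 : (r : ℤ) * m < (j : ℤ) := by exact_mod_cast hjgt
          have f4 : (1 : ℤ) ≤ (mj j : ℤ) := by exact_mod_cast hmj j
          have f6 : (r : ℤ) * n + 1 ≤ (L : ℤ) * m := by
            have : r * n + 1 ≤ L * m := hcon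
            exact_mod_cast this
          have hrz : (1 : ℤ) ≤ (r : ℤ) := by exact_mod_cast hrpos
          have p1 : (L : ℤ) * mj j * (m * (j + 1)) ≤ (r : ℤ) * nj j * (m * (j + 1)) := by
            apply mul_le_mul_of_nonneg_right f1
            positivity
          have p2 : (r : ℤ) * ((nj j : ℤ) * (m * (j + 1))) < (r : ℤ) * ((mj j : ℤ) * (n * (j + 1) + m)) := by
            apply mul_lt_mul_of_pos_left f2
            omega
          have p3 : ((r : ℤ) * n + 1) * (mj j * (j + 1)) ≤ (L : ℤ) * m * (mj j * (j + 1)) := by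
            apply mul_le_mul_of_nonneg_right f6
            positivity
          have p4 : (r : ℤ) * m * (mj j) < (j : ℤ) * (mj j) := by
            apply mul_lt_mul_of_pos_right f3
            omega
          nlinarith [p1, p2, p3, p4, f4]
      have h9 : (L : ℤ) * m ≤ (r : ℤ) * n := by exact_mod_cast hgoal
      linarith
    obtain ⟨chom⟩ := hom_of_closedOK G D n m hm h2 horD hclD
    obtain ⟨D', ρ', hor', hρb', hρd'⟩ := exists_orient G n m hm h2 chom
    exact ⟨D', hor', no_bad_path_of_rho D' n m hm h2 ρ' hρb' hρd'⟩
  · rintro ⟨D, hor, hgood⟩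
    have hcl := closedOK_of_good D n m hm h2 hgood
    have hhom := hom_of_closedOK G D n m hm h2 hor hcl
    rw [hSdef]
    apply csInf_le
    · refine ⟨0, ?_⟩
      rintro x ⟨n', m', _, _, _, _, rfl⟩
      positivity
    · exact ⟨n, m, hm, h2, hcop, hhom, rfl⟩
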